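/- There is a constant C > 0 such that for every M > 0, a ∈ (0,1), and r ∈ (0, min(a, 1/2)), one has ((a−r)/(1−r))·(f_M((a−r)/(1−r)) − f_M(a)) ≤ C·r, where f_M(x) := −log(max(x, e^{−M})). -/
import Mathlib


open Set

/-- `f_M(x) = -log(max(x, e^{-M}))`. -/
noncomputable def fM (M x : ℝ) : ℝ := -Real.log (max x (Real.exp (-M)))

theorem stmt5 :
    ∃ C > (0:ℝ), ∀ M > (0:ℝ), ∀ a ∈ Ioo (0:ℝ) 1, ∀ r ∈ Ioo (0:ℝ) (min a (1/2)),
      (a - r) / (1 - r) * (fM M ((a - r) / (1 - r)) - fM M a) ≤ C * r := by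
  refine ⟨2, by norm_num, ?_⟩
  intro M hM a ha r hr
  obtain ⟨ha0, ha1⟩ := ha
  obtain ⟨hr0, hr1⟩ := hr
  rw [lt_min_iff] at hr1
  obtain ⟨hra, hrh⟩ := hr1
  set t : ℝ := Real.exp (-M) with htdef
  have ht : 0 < t := Real.exp_pos _
  have h1r : (0:ℝ) < 1 - r := by linarith
  set b : ℝ := (a - r) / (1 - r) with hbdef
  have hb : 0 < b := div_pos (by linarith) h1r
  have hba : b ≤ a := by
    rw [hbdef, div_le_iff₀ h1r]
    nlinarith
  set A : ℝ := max a t with hA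
  set B : ℝ := max b t with hB
  have hB0 : 0 < B := lt_of_lt_of_le ht (le_max_right _ _)
  have hbB : b ≤ B := le_max_left _ _
  have hBA : B ≤ A := max_le_max hba le_rfl
  have hABd : A - B ≤ a - b := by
    have h1 : A ≤ B + (a - b) :=
      max_le (by linarith [le_max_left b t]) (by linarith [le_max_right b t])
    linarith
  have hab2 : a - b ≤ 2 * r := by
    have h : a - b = r * (1 - a) / (1 - r) := by
      rw [hbdef]; field_simp; ring
    rw [h, div_le_iff₀ h1r]; nlinarith
  have hf : fM M b - fM M a = Real.log A - Real.log B := by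
    simp [fM, hA, hB, htdef]
    ring
  rw [hf]
  have hlog : Real.log A - Real.log B ≤ (A - B) / B := by
    rw [← Real.log_div (by positivity) (by positivity)]
    have := Real.log_le_sub_one_of_pos (x := A / B) (by positivity)
    calc Real.log (A / B) ≤ A / B - 1 := this
      _ = (A - B) / B := by field_simp
  calc b * (Real.log A - Real.log B) ≤ b * ((A - B) / B) :=
        mul_le_mul_of_nonneg_left hlog hb.le
    _ = (A - B) * (b / B) := by ring
    _ ≤ (A - B) * 1 := by
        apply mul_le_mul_of_nonneg_left _ (by linarith)
        rw [div_le_one hB0]; exact hbB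
    _ = A - B := by ring
    _ ≤ a - b := hABd
    _ ≤ 2 * r := hab2
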